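/- Let p be a prime, ω := Complex.exp(2πi/p), and for z : ZMod p set e(z) := ω^(z.val). Let A be an associative unital ℂ-algebra, a : ZMod p, and u : ZMod p → A a family with u 0 = 1 and u g * u h = e(a * g * h) • u (g + h) for all g h : ZMod p. Let Θ : ZMod p → ℂ satisfy Θ 0 = 1 and Θ(g + h) = Θ(g) * Θ(h) * e(a * g * h) for all g h : ZMod p. For x : ZMod p define E x := (p : ℂ)⁻¹ • ∑_{g : ZMod p} (e(g * x) * Θ g) • u g. Then (i) E x * E x = E x for every x; (ii) E x * E y = 0 whenever x ≠ y; and (iii) ∑_{x : ZMod p} E x = 1. -/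

import Mathlib

/-- In a twisted group algebra of `ZMod p` with 2-cocycle `e(a g h)` trivialized
by `Θ`, the elements `E x = p⁻¹ • ∑ g, (e(g x) Θ(g)) • u g` form a complete
family of orthogonal idempotents. -/
theorem stmt_9 (p : ℕ) [Fact p.Prime]
    (e : ZMod p → ℂ)
    (he : ∀ z : ZMod p, e z = Complex.exp (2 * Real.pi * Complex.I / p) ^ z.val)
    (A : Type*) [Ring A] [Algebra ℂ A]
    (a : ZMod p) (u : ZMod p → A)
    (hu0 : u 0 = 1)
    (hu : ∀ g h : ZMod p, u g * u h = e (a * g * h) • u (g + h))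
    (Θ : ZMod p → ℂ) (hΘ0 : Θ 0 = 1)
    (hΘ : ∀ g h : ZMod p, Θ (g + h) = Θ g * Θ h * e (a * g * h))
    (E : ZMod p → A)
    (hE : ∀ x : ZMod p, E x = (p : ℂ)⁻¹ • ∑ g : ZMod p, (e (g * x) * Θ g) • u g) :
    (∀ x : ZMod p, E x * E x = E x) ∧
    (∀ x y : ZMod p, x ≠ y → E x * E y = 0) ∧
    (∑ x : ZMod p, E x = 1) := by
  have hp : p.Prime := Fact.out
  have hp1 : 1 < p := hp.one_lt
  have hp0 : (p : ℂ) ≠ 0 := Nat.cast_ne_zero.mpr hp.ne_zero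
  set ζ : ℂ := Complex.exp (2 * Real.pi * Complex.I / p) with hζ
  have hprim : IsPrimitiveRoot ζ p := Complex.isPrimitiveRoot_exp p hp.ne_zero
  have hζp : ζ ^ p = 1 := hprim.pow_eq_one
  -- e is additive-to-multiplicative
  have he_add : ∀ z w : ZMod p, e (z + w) = e z * e w := by
    intro z w
    rw [he, he, he, ← pow_add, ZMod.val_add]
    exact (pow_eq_pow_mod _ hζp).symm
  have he0 : e 0 = 1 := by rw [he]; simp
  -- character sum
  have hval : ∑ g : ZMod p, e g = ∑ i ∈ Finset.range p, ζ ^ i := by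
    refine Finset.sum_nbij' (fun g : ZMod p => g.val) (fun i : ℕ => (i : ZMod p))
      (fun g _ => Finset.mem_range.mpr (ZMod.val_lt g)) (fun i _ => Finset.mem_univ _)
      (fun g _ => by simp [ZMod.natCast_val, ZMod.cast_id])
      (fun i hi => ZMod.val_cast_of_lt (Finset.mem_range.mp hi))
      (fun g _ => he g)
  have hsum : ∀ c : ZMod p, ∑ g : ZMod p, e (g * c) = if c = 0 then (p : ℂ) else 0 := by
    intro c
    by_cases hc : c = 0
    · simp [hc, he0]
    · rw [if_neg hc]
      have : ∑ g : ZMod p, e (g * c) = ∑ g : ZMod p, e g :=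
        Fintype.sum_equiv (Equiv.mulRight₀ c hc) _ _ (fun g => rfl)
      rw [this, hval, hprim.geom_sum_eq_zero hp1]
  -- key computation
  have key : ∀ x y : ZMod p, E x * E y = (if x = y then (1:ℂ) else 0) • E y := by
    intro x y
    rw [hE x, hE y, smul_mul_smul_comm, Finset.sum_mul_sum]
    have step1 : ∀ g h : ZMod p,
        (e (g * x) * Θ g) • u g * ((e (h * y) * Θ h) • u h)
          = (e (g * (x - y)) * e ((g + h) * y) * Θ (g + h)) • u (g + h) := by
      intro g h
      rw [smul_mul_smul_comm, hu, smul_smul]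
      congr 1
      have : Θ (g + h) = Θ g * Θ h * e (a * g * h) := hΘ g h
      have hmul : e ((g + h) * y) = e (g * y) * e (h * y) := by
        rw [← he_add]; ring_nf
      have hsub : e (g * (x - y)) * e (g * y) = e (g * x) := by
        rw [← he_add]; ring_nf
      calc e (g * x) * Θ g * (e (h * y) * Θ h) * e (a * g * h)
          = (e (g * x) * e (h * y)) * (Θ g * Θ h * e (a * g * h)) := by ring
        _ = (e (g * (x - y)) * e (g * y) * e (h * y)) * Θ (g + h) := by
            rw [hsub, this]
        _ = e (g * (x - y)) * (e (g * y) * e (h * y)) * Θ (g + h) := by ring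
        _ = e (g * (x - y)) * e ((g + h) * y) * Θ (g + h) := by rw [hmul]
    calc ((p:ℂ)⁻¹ * (p:ℂ)⁻¹) • ∑ g : ZMod p, ∑ h : ZMod p,
            (e (g * x) * Θ g) • u g * ((e (h * y) * Θ h) • u h)
        = ((p:ℂ)⁻¹ * (p:ℂ)⁻¹) • ∑ g : ZMod p, ∑ k : ZMod p,
            (e (g * (x - y)) * e (k * y) * Θ k) • u k := by
          congr 1
          refine Finset.sum_congr rfl fun g _ => ?_
          rw [show (∑ h : ZMod p, (e (g * x) * Θ g) • u g * ((e (h * y) * Θ h) • u h))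
              = ∑ h : ZMod p, (e (g * (x - y)) * e ((g + h) * y) * Θ (g + h)) • u (g + h)
            from Finset.sum_congr rfl fun h _ => step1 g h]
          exact Equiv.sum_comp (Equiv.addLeft g)
            (fun k => (e (g * (x - y)) * e (k * y) * Θ k) • u k)
      _ = ((p:ℂ)⁻¹ * (p:ℂ)⁻¹) • ∑ k : ZMod p,
            ((∑ g : ZMod p, e (g * (x - y))) * (e (k * y) * Θ k)) • u k := by
          rw [Finset.sum_comm]
          congr 1
          refine Finset.sum_congr rfl fun k _ => ?_
          rw [← Finset.sum_smul, Finset.sum_mul]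
          congr 1
          refine Finset.sum_congr rfl fun g _ => ?_
          ring
      _ = ((p:ℂ)⁻¹ * (p:ℂ)⁻¹) • ∑ k : ZMod p,
            ((if x = y then (p:ℂ) else 0) * (e (k * y) * Θ k)) • u k := by
          simp only [hsum, sub_eq_zero]
      _ = (if x = y then (1:ℂ) else 0) •
            ((p:ℂ)⁻¹ • ∑ g : ZMod p, (e (g * y) * Θ g) • u g) := by
          by_cases hxy : x = y
          · simp only [if_pos hxy, one_smul, smul_smul, Finset.smul_sum]
            refine Finset.sum_congr rfl fun k _ => ?_
            congr 1
            field_simp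
          · simp [if_neg hxy]
  refine ⟨fun x => by rw [key x x, if_pos rfl, one_smul],
    fun x y hxy => by rw [key x y, if_neg hxy, zero_smul], ?_⟩
  -- completeness
  have : ∑ x : ZMod p, E x
      = (p:ℂ)⁻¹ • ∑ g : ZMod p, ((∑ x : ZMod p, e (g * x)) * Θ g) • u g := by
    simp only [hE]
    rw [← Finset.smul_sum]
    congr 1
    rw [Finset.sum_comm]
    refine Finset.sum_congr rfl fun g _ => ?_
    rw [Finset.sum_mul, Finset.sum_smul]
  rw [this]
  have hsum' : ∀ g : ZMod p, ∑ x : ZMod p, e (g * x) = if g = 0 then (p:ℂ) else 0 := by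
    intro g
    rw [show (∑ x : ZMod p, e (g * x)) = ∑ x : ZMod p, e (x * g) from
      Finset.sum_congr rfl fun x _ => by rw [mul_comm]]
    exact hsum g
  rw [show (∑ g : ZMod p, ((∑ x : ZMod p, e (g * x)) * Θ g) • u g)
      = ∑ g : ZMod p, ((if g = 0 then (p:ℂ) else 0) * Θ g) • u g from
    Finset.sum_congr rfl fun g _ => by rw [hsum' g]]
  rw [Finset.sum_eq_single 0]
  · rw [if_pos rfl, hΘ0, hu0, mul_one, smul_smul]
    rw [inv_mul_cancel₀ hp0, one_smul]
  · intro g _ hg; rw [if_neg hg, zero_mul, zero_smul]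
  · intro h; exact absurd (Finset.mem_univ 0) h
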